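/- Let g ≥ 4 and suppose the linear s-uniform hypergraph H has no Berge cycle of length at most g. Let P be a good path in G with endpoint v, and let u be a vertex not on P such that uv is an edge of G. If the path P + uv obtained by appending the edge uv to P is bad, then there exist a hyperedge f of H with f ≠ h(uv) and an edge e of P which is neither the edge of P incident to v nor the edge of P adjacent to that edge (i.e., e is at distance at least 2 from v along P), such that f intersects h(uv) and f intersects h(e). -/

import Mathlib

open SimpleGraph

/-- The hypergraph `H` has no Berge cycle of length `t` with `2 ≤ t ≤ g`. -/
def BergeCycleFreeUpTo {V : Type*} (H : Set (Finset V)) (g : ℕ) : Prop :=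
  ¬ ∃ t : ℕ, 2 ≤ t ∧ t ≤ g ∧
    ∃ (v : ZMod t → V) (e : ZMod t → Finset V),
      Function.Injective v ∧ Function.Injective e ∧ (∀ i, e i ∈ H) ∧
      ∀ i, v i ∈ e (i - 1) ∧ v i ∈ e i

/-- A path (walk) `P` in `G` is good with respect to the hypergraph `H` and the
assignment `h` of hyperedges to edges. -/
def IsGoodPath {V : Type*} [DecidableEq V] (H : Set (Finset V))
    {G : SimpleGraph V} (h : Sym2 V → Finset V) {u v : V} (P : G.Walk u v) : Prop :=
  (∀ e ∈ P.edges, ∀ e' ∈ P.edges, e ≠ e' →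
      ∀ x : V, (x ∈ h e ∧ x ∈ h e') ↔ (x ∈ e ∧ x ∈ e')) ∧
  (∀ f ∈ H, (∀ e ∈ P.edges, f ≠ h e) →
      ∀ x y : V, x ∈ f → y ∈ f →
        (∃ e ∈ P.edges, x ∈ h e) → (∃ e' ∈ P.edges, y ∈ h e') → x = y)

/-- Observation 5.3 of the paper: if `P` is a good path ending at `v`, `u` is a vertex
outside `P` adjacent to `v`, and the path `P + uv` is bad, then some hyperedge
`f ≠ h(uv)` intersects `h(uv)` as well as `h(e)` for an edge `e` of `P` at distance
at least `2` from `v` along `P` (that is, an edge among all but the last two edges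
of `P`). -/
lemma berge3 {V : Type} {H : Set (Finset V)} {g : ℕ} (hg : 3 ≤ g)
    (hgirth : BergeCycleFreeUpTo H g) {f1 f2 f3 : Finset V}
    (h1 : f1 ∈ H) (h2 : f2 ∈ H) (h3 : f3 ∈ H)
    (hf12 : f1 ≠ f2) (hf13 : f1 ≠ f3) (hf23 : f2 ≠ f3)
    {v1 v2 v3 : V} (hv12 : v1 ≠ v2) (hv13 : v1 ≠ v3) (hv23 : v2 ≠ v3)
    (m11 : v1 ∈ f3) (m12 : v1 ∈ f1) (m21 : v2 ∈ f1) (m22 : v2 ∈ f2)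
    (m31 : v3 ∈ f2) (m32 : v3 ∈ f3) : False := by
  classical
  have key : ∀ k : ZMod 3, k = 0 ∨ k = 1 ∨ k = 2 := by decide
  apply hgirth
  refine ⟨3, by norm_num, hg,
    (fun i => if i = 0 then v1 else if i = 1 then v2 else v3),
    (fun i => if i = 0 then f1 else if i = 1 then f2 else f3), ?_, ?_, ?_, ?_⟩
  · intro i j hij
    rcases key i with rfl|rfl|rfl <;> rcases key j with rfl|rfl|rfl <;>
    first
    | rfl
    | (simp only [show ((1:ZMod 3) = 0) ↔ False from by decide,
        show ((2:ZMod 3) = 0) ↔ False from by decide,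
        show ((2:ZMod 3) = 1) ↔ False from by decide,
        eq_self_iff_true, if_true, if_false] at hij ⊢; tauto)
  · intro i j hij
    rcases key i with rfl|rfl|rfl <;> rcases key j with rfl|rfl|rfl <;>
    first
    | rfl
    | (simp only [show ((1:ZMod 3) = 0) ↔ False from by decide,
        show ((2:ZMod 3) = 0) ↔ False from by decide,
        show ((2:ZMod 3) = 1) ↔ False from by decide,
        eq_self_iff_true, if_true, if_false] at hij ⊢; tauto)
  · intro i
    rcases key i with rfl|rfl|rfl <;>
      simp only [show ((1:ZMod 3) = 0) ↔ False from by decide,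
        show ((2:ZMod 3) = 0) ↔ False from by decide,
        show ((2:ZMod 3) = 1) ↔ False from by decide,
        eq_self_iff_true, if_true, if_false] <;> assumption
  · intro i
    rcases key i with rfl|rfl|rfl <;>
      simp only [show ((0:ZMod 3) - 1 = 2) from by decide,
        show ((1:ZMod 3) - 1 = 0) from by decide,
        show ((2:ZMod 3) - 1 = 1) from by decide,
        show ((1:ZMod 3) = 0) ↔ False from by decide,
        show ((2:ZMod 3) = 0) ↔ False from by decide,
        show ((2:ZMod 3) = 1) ↔ False from by decide,
        eq_self_iff_true, if_true, if_false] <;> exact ⟨by assumption, by assumption⟩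

lemma berge4 {V : Type} {H : Set (Finset V)} {g : ℕ} (hg : 4 ≤ g)
    (hgirth : BergeCycleFreeUpTo H g) {f1 f2 f3 f4 : Finset V}
    (h1 : f1 ∈ H) (h2 : f2 ∈ H) (h3 : f3 ∈ H) (h4 : f4 ∈ H)
    (hf12 : f1 ≠ f2) (hf13 : f1 ≠ f3) (hf14 : f1 ≠ f4)
    (hf23 : f2 ≠ f3) (hf24 : f2 ≠ f4) (hf34 : f3 ≠ f4)
    {v1 v2 v3 v4 : V} (hv12 : v1 ≠ v2) (hv13 : v1 ≠ v3) (hv14 : v1 ≠ v4)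
    (hv23 : v2 ≠ v3) (hv24 : v2 ≠ v4) (hv34 : v3 ≠ v4)
    (m11 : v1 ∈ f4) (m12 : v1 ∈ f1) (m21 : v2 ∈ f1) (m22 : v2 ∈ f2)
    (m31 : v3 ∈ f2) (m32 : v3 ∈ f3) (m41 : v4 ∈ f3) (m42 : v4 ∈ f4) : False := by
  classical
  have key : ∀ k : ZMod 4, k = 0 ∨ k = 1 ∨ k = 2 ∨ k = 3 := by decide
  apply hgirth
  refine ⟨4, by norm_num, hg,
    (fun i => if i = 0 then v1 else if i = 1 then v2 else if i = 2 then v3 else v4),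
    (fun i => if i = 0 then f1 else if i = 1 then f2 else if i = 2 then f3 else f4),
    ?_, ?_, ?_, ?_⟩
  · intro i j hij
    rcases key i with rfl|rfl|rfl|rfl <;> rcases key j with rfl|rfl|rfl|rfl <;>
    first
    | rfl
    | (simp only [show ((1:ZMod 4) = 0) ↔ False from by decide,
        show ((2:ZMod 4) = 0) ↔ False from by decide,
        show ((2:ZMod 4) = 1) ↔ False from by decide,
        show ((3:ZMod 4) = 0) ↔ False from by decide,
        show ((3:ZMod 4) = 1) ↔ False from by decide,
        show ((3:ZMod 4) = 2) ↔ False from by decide,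
        eq_self_iff_true, if_true, if_false] at hij ⊢; tauto)
  · intro i j hij
    rcases key i with rfl|rfl|rfl|rfl <;> rcases key j with rfl|rfl|rfl|rfl <;>
    first
    | rfl
    | (simp only [show ((1:ZMod 4) = 0) ↔ False from by decide,
        show ((2:ZMod 4) = 0) ↔ False from by decide,
        show ((2:ZMod 4) = 1) ↔ False from by decide,
        show ((3:ZMod 4) = 0) ↔ False from by decide,
        show ((3:ZMod 4) = 1) ↔ False from by decide,
        show ((3:ZMod 4) = 2) ↔ False from by decide,
        eq_self_iff_true, if_true, if_false] at hij ⊢; tauto)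
  · intro i
    rcases key i with rfl|rfl|rfl|rfl <;>
      simp only [show ((1:ZMod 4) = 0) ↔ False from by decide,
        show ((2:ZMod 4) = 0) ↔ False from by decide,
        show ((2:ZMod 4) = 1) ↔ False from by decide,
        show ((3:ZMod 4) = 0) ↔ False from by decide,
        show ((3:ZMod 4) = 1) ↔ False from by decide,
        show ((3:ZMod 4) = 2) ↔ False from by decide,
        eq_self_iff_true, if_true, if_false] <;> assumption
  · intro i
    rcases key i with rfl|rfl|rfl|rfl <;>
      simp only [show ((0:ZMod 4) - 1 = 3) from by decide,
        show ((1:ZMod 4) - 1 = 0) from by decide,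
        show ((2:ZMod 4) - 1 = 1) from by decide,
        show ((3:ZMod 4) - 1 = 2) from by decide,
        show ((1:ZMod 4) = 0) ↔ False from by decide,
        show ((2:ZMod 4) = 0) ↔ False from by decide,
        show ((2:ZMod 4) = 1) ↔ False from by decide,
        show ((3:ZMod 4) = 0) ↔ False from by decide,
        show ((3:ZMod 4) = 1) ↔ False from by decide,
        show ((3:ZMod 4) = 2) ↔ False from by decide,
        eq_self_iff_true, if_true, if_false] <;> exact ⟨by assumption, by assumption⟩

lemma lin_eq {V : Type} [DecidableEq V] {H : Set (Finset V)}
    (hlinear : ∀ e ∈ H, ∀ f ∈ H, e ≠ f → (e ∩ f).card ≤ 1)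
    {f f' : Finset V} (hf : f ∈ H) (hf' : f' ∈ H) (hne : f ≠ f')
    {a b : V} (ha : a ∈ f) (ha' : a ∈ f') (hb : b ∈ f) (hb' : b ∈ f') : a = b :=
  Finset.card_le_one.mp (hlinear f hf f' hf' hne) a
    (Finset.mem_inter.2 ⟨ha, ha'⟩) b (Finset.mem_inter.2 ⟨hb, hb'⟩)

lemma last_case {V : Type} [DecidableEq V] {H : Set (Finset V)} {g : ℕ} (hg : 4 ≤ g)
    (hgirth : BergeCycleFreeUpTo H g)
    (hlinear : ∀ e ∈ H, ∀ f ∈ H, e ≠ f → (e ∩ f).card ≤ 1)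
    {f e1 e2 : Finset V} (hf : f ∈ H) (h1 : e1 ∈ H) (h2 : e2 ∈ H)
    (hfe1 : f ≠ e1) (hfe2 : f ≠ e2) (h12 : e1 ≠ e2)
    {x y v : V} (hxf : x ∈ f) (hx1 : x ∈ e1) (hyf : y ∈ f) (hy2 : y ∈ e2)
    (hxy : x ≠ y) (hv1 : v ∈ e1) (hv2 : v ∈ e2) : False := by
  have hxv : x ≠ v := by
    rintro rfl
    exact hxy (lin_eq hlinear hf h2 hfe2 hxf hv2 hyf hy2)
  have hvy : v ≠ y := by
    rintro rfl
    exact hxv (lin_eq hlinear hf h1 hfe1 hxf hx1 hyf hv1)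
  exact berge3 (by omega) hgirth h1 h2 hf h12 (Ne.symm hfe1) (Ne.symm hfe2)
    hxv hxy hvy hxf hx1 hv1 hv2 hy2 hyf

lemma walk_concat_cases {V : Type} {G : SimpleGraph V} {w v : V} (P : G.Walk w v) :
    P.edges = [] ∨ ∃ (p : V) (Q : G.Walk w p) (hpv : G.Adj p v), P = Q.concat hpv := by
  induction P using SimpleGraph.Walk.concatRec with
  | Hnil => exact Or.inl rfl
  | Hconcat Q hadj ih => exact Or.inr ⟨_, Q, hadj, rfl⟩

theorem bad_extension_ruined {V : Type} [DecidableEq V] (s g : ℕ) (hg : 4 ≤ g)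
    (H : Set (Finset V))
    (huniform : ∀ e ∈ H, e.card = s)
    (hlinear : ∀ e ∈ H, ∀ f ∈ H, e ≠ f → (e ∩ f).card ≤ 1)
    (hgirth : BergeCycleFreeUpTo H g)
    (G : SimpleGraph V) (h : Sym2 V → Finset V)
    (hmem : ∀ e ∈ G.edgeSet, h e ∈ H ∧ ∀ x ∈ e, x ∈ h e)
    (hinj : Set.InjOn h G.edgeSet)
    {w v u : V} (P : G.Walk w v) (hP : P.IsPath)
    (hu : u ∉ P.support) (hadj : G.Adj v u)
    (hgood : IsGoodPath H h P)
    (hbad : ¬ IsGoodPath H h (P.concat hadj)) :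
    ∃ f ∈ H, f ≠ h s(u, v) ∧ (f ∩ h s(u, v)).Nonempty ∧
      ∃ e ∈ P.edges.dropLast.dropLast, (f ∩ h e).Nonempty := by
  classical
  rw [show (s(u,v) : Sym2 V) = s(v,u) from Sym2.eq_swap]
  have huvE : s(v,u) ∈ G.edgeSet := hadj
  have hHuv : h s(v,u) ∈ H := (hmem _ huvE).1
  have hvuv : v ∈ h s(v,u) := (hmem _ huvE).2 v (by simp)
  have hPedge : ∀ e ∈ P.edges, e ∈ G.edgeSet := fun e he => P.edges_subset_edgeSet he
  have hPH : ∀ e ∈ P.edges, h e ∈ H := fun e he => (hmem _ (hPedge e he)).1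
  have hend : ∀ e ∈ P.edges, ∀ x ∈ e, x ∈ h e := fun e he => (hmem _ (hPedge e he)).2
  have huvnotP : s(v,u) ∉ P.edges := fun hm => hu (P.snd_mem_support_of_mem_edges hm)
  have hhne : ∀ e ∈ P.edges, h e ≠ h s(v,u) := by
    intro e he heq
    exact huvnotP (hinj (hPedge e he) huvE heq ▸ he)
  have hE : ∀ e, e ∈ (P.concat hadj).edges ↔ e ∈ P.edges ∨ e = s(v,u) := by
    intro e; rw [Walk.edges_concat, List.concat_eq_append]; simp
  have scen : (∃ e1 ∈ P.edges, ∃ x, (x ∈ h e1 ∧ x ∈ h s(v,u)) ∧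
        ¬(x ∈ e1 ∧ x ∈ (s(v,u) : Sym2 V)))
      ∨ (∃ f ∈ H, f ≠ h s(v,u) ∧ (∀ e ∈ P.edges, f ≠ h e) ∧
          ∃ e1 ∈ P.edges, ∃ x y : V, x ∈ f ∧ x ∈ h e1 ∧ y ∈ f ∧ y ∈ h s(v,u) ∧ x ≠ y) := by
    unfold IsGoodPath at hbad
    rcases not_and_or.mp hbad with hA | hB
    · push_neg at hA
      obtain ⟨e, he, e', he', hee', x, hx⟩ := hA
      have hfor : (x ∈ h e ∧ x ∈ h e') ∧ ¬(x ∈ e ∧ x ∈ e') := by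
        have h1 : x ∈ e → x ∈ h e :=
          fun hh => (hmem _ ((P.concat hadj).edges_subset_edgeSet he)).2 x hh
        have h2 : x ∈ e' → x ∈ h e' :=
          fun hh => (hmem _ ((P.concat hadj).edges_subset_edgeSet he')).2 x hh
        tauto
      rcases (hE e).mp he with heP | rfl
      · rcases (hE e').mp he' with he'P | rfl
        · exact absurd ((hgood.1 e heP e' he'P hee' x).mp hfor.1) hfor.2
        · exact Or.inl ⟨e, heP, x, hfor.1, fun hc => hfor.2 hc⟩
      · rcases (hE e').mp he' with he'P | rfl
        · exact Or.inl ⟨e', he'P, x, ⟨hfor.1.2, hfor.1.1⟩, fun hc => hfor.2 ⟨hc.2, hc.1⟩⟩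
        · exact absurd rfl hee'
    · push_neg at hB
      obtain ⟨f, hf, hfall, x, y, hxf, hyf, ⟨e1, he1, hx1⟩, ⟨e2, he2, hy2⟩, hxy⟩ := hB
      have hfuv : f ≠ h s(v,u) := hfall _ ((hE _).mpr (Or.inr rfl))
      have hfP : ∀ e ∈ P.edges, f ≠ h e := fun e he => hfall _ ((hE _).mpr (Or.inl he))
      rcases (hE e1).mp he1 with h1P | rfl
      · rcases (hE e2).mp he2 with h2P | rfl
        · exact absurd (hgood.2 f hf hfP x y hxf hyf ⟨e1, h1P, hx1⟩ ⟨e2, h2P, hy2⟩) hxy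
        · exact Or.inr ⟨f, hf, hfuv, hfP, e1, h1P, x, y, hxf, hx1, hyf, hy2, hxy⟩
      · rcases (hE e2).mp he2 with h2P | rfl
        · exact Or.inr ⟨f, hf, hfuv, hfP, e2, h2P, y, x, hyf, hy2, hxf, hx1, Ne.symm hxy⟩
        · exact absurd (lin_eq hlinear hf hHuv hfuv hxf hx1 hyf hy2) hxy
  clear hbad
  rcases walk_concat_cases P with hPnil | ⟨p, Q, hpv, rfl⟩
  · rcases scen with ⟨e1, he1, -⟩ | ⟨f, -, -, -, e1, he1, -⟩ <;>
      (rw [hPnil] at he1; simp at he1)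
  rcases walk_concat_cases Q with hQnil | ⟨q, R, hqp, rfl⟩
  · -- single edge case
    exfalso
    have hEP : (Q.concat hpv).edges = [s(p,v)] := by
      rw [Walk.edges_concat, hQnil]; rfl
    have hpvP : (s(p,v) : Sym2 V) ∈ (Q.concat hpv).edges := by rw [hEP]; simp
    have hvpv : v ∈ h s(p,v) := hend _ hpvP v (by simp)
    have hpvuvne : h s(p,v) ≠ h s(v,u) := hhne _ hpvP
    rcases scen with ⟨e1, he1, x, ⟨hx1, hx2⟩, hnot⟩ |
      ⟨f, hf, hfuv, hfP, e1, he1, x, y, hxf, hx1, hyf, hy2, hxy⟩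
    · rw [hEP, List.mem_singleton] at he1; subst he1
      have hxv : x = v := lin_eq hlinear (hPH _ hpvP) hHuv hpvuvne hx1 hx2 hvpv hvuv
      subst hxv
      exact hnot ⟨by simp, by simp⟩
    · rw [hEP, List.mem_singleton] at he1; subst he1
      exact last_case hg hgirth hlinear hf (hPH _ hpvP) hHuv (hfP _ hpvP) hfuv hpvuvne
        hxf hx1 hyf hy2 hxy hvpv hvuv
  · -- general case: P = (R.concat hqp).concat hpv
    have hEP : ((R.concat hqp).concat hpv).edges = (R.edges.concat s(q,p)).concat s(p,v) := by
      rw [Walk.edges_concat, Walk.edges_concat]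
    have hdrop : ((R.concat hqp).concat hpv).edges.dropLast.dropLast = R.edges := by
      rw [hEP, List.concat_eq_append, List.concat_eq_append, List.dropLast_concat,
        List.dropLast_concat]
    have hqpP : (s(q,p) : Sym2 V) ∈ ((R.concat hqp).concat hpv).edges := by
      rw [hEP]; simp [List.concat_eq_append]
    have hpvP : (s(p,v) : Sym2 V) ∈ ((R.concat hqp).concat hpv).edges := by
      rw [hEP]; simp [List.concat_eq_append]
    -- path facts
    rw [← Walk.isPath_reverse_iff, Walk.reverse_concat, Walk.cons_isPath_iff] at hP
    have hP1 : (R.concat hqp).IsPath := (Walk.isPath_reverse_iff _).mp hP.1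
    have hP1b : v ∉ (R.concat hqp).support := by
      have h2 := hP.2
      simp only [Walk.support_reverse, List.mem_reverse] at h2
      exact h2
    have hP2b : p ∉ R.support := by
      have hh := hP1
      rw [← Walk.isPath_reverse_iff, Walk.reverse_concat, Walk.cons_isPath_iff] at hh
      have h2 := hh.2
      simp only [Walk.support_reverse, List.mem_reverse] at h2
      exact h2
    have hqsup : q ∈ (R.concat hqp).support := by
      rw [Walk.support_concat]
      exact List.mem_append.mpr (Or.inl R.end_mem_support)
    have hpsup : p ∈ (R.concat hqp).support := by
      rw [Walk.support_concat]
      exact List.mem_append.mpr (Or.inr (by simp))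
    have hpsupP : p ∈ ((R.concat hqp).concat hpv).support := by
      rw [Walk.support_concat]
      exact List.mem_append.mpr (Or.inl hpsup)
    have hqsupP : q ∈ ((R.concat hqp).concat hpv).support := by
      rw [Walk.support_concat]
      exact List.mem_append.mpr (Or.inl hqsup)
    have hvp : v ≠ p := fun hh => hP1b (hh ▸ hpsup)
    have hvq : v ≠ q := fun hh => hP1b (hh ▸ hqsup)
    have hpq : p ≠ q := fun hh => hP2b (hh ▸ R.end_mem_support)
    have hup : u ≠ p := fun hh => hu (hh ▸ hpsupP)
    have huq : u ≠ q := fun hh => hu (hh ▸ hqsupP)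
    -- edge distinctness
    have heqp_pv : (s(q,p) : Sym2 V) ≠ s(p,v) := by
      intro hh
      rcases Sym2.eq_iff.mp hh with ⟨h1, h2⟩ | ⟨h1, h2⟩
      · exact hvp h2.symm
      · exact hvq h1.symm
    have hepv_uv : (s(p,v) : Sym2 V) ≠ s(v,u) := by
      intro hh
      rcases Sym2.eq_iff.mp hh with ⟨h1, h2⟩ | ⟨h1, h2⟩
      · exact hvp h1.symm
      · exact hup h1.symm
    have hqppvne : h s(q,p) ≠ h s(p,v) := fun hh =>
      heqp_pv (hinj (hPedge _ hqpP) (hPedge _ hpvP) hh)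
    have hpvuvne : h s(p,v) ≠ h s(v,u) := hhne _ hpvP
    have hqpuvne : h s(q,p) ≠ h s(v,u) := hhne _ hqpP
    -- memberships
    have hp_qp : p ∈ h s(q,p) := hend _ hqpP p (by simp)
    have hp_pv : p ∈ h s(p,v) := hend _ hpvP p (by simp)
    have hv_pv : v ∈ h s(p,v) := hend _ hpvP v (by simp)
    -- exclusions
    have hv_notqp : v ∉ h s(q,p) := by
      intro hvin
      have hiff := (hgood.1 _ hqpP _ hpvP heqp_pv v).mp ⟨hvin, hv_pv⟩
      rcases Sym2.mem_iff.mp hiff.1 with h1 | h1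
      · exact hvq h1
      · exact hvp h1
    have hp_notuv : p ∉ h s(v,u) := by
      intro hpin
      exact hvp (lin_eq hlinear (hPH _ hpvP) hHuv hpvuvne hv_pv hvuv hp_pv hpin)
    rcases scen with ⟨e1, he1, x, ⟨hx1, hx2⟩, hnot⟩ |
      ⟨f, hf, hfuv, hfP, e1, he1, x, y, hxf, hx1, hyf, hy2, hxy⟩
    · have hmem3 : e1 ∈ R.edges ∨ e1 = s(q,p) ∨ e1 = s(p,v) := by
        rw [hEP] at he1
        simpa [List.concat_eq_append, or_assoc] using he1
      rcases hmem3 with hR | rfl | rfl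
      · refine ⟨h e1, hPH _ he1, hhne _ he1, ⟨x, Finset.mem_inter.2 ⟨hx1, hx2⟩⟩,
          e1, ?_, ⟨x, Finset.mem_inter.2 ⟨hx1, hx1⟩⟩⟩
        rw [hdrop]; exact hR
      · exfalso
        have hpx : p ≠ x := by
          intro hh; rw [← hh] at hx2; exact hp_notuv hx2
        exact last_case hg hgirth hlinear (hPH _ hqpP) (hPH _ hpvP) hHuv hqppvne hqpuvne
          hpvuvne hp_qp hp_pv hx1 hx2 hpx hv_pv hvuv
      · exfalso
        have hxv : x = v := lin_eq hlinear (hPH _ hpvP) hHuv hpvuvne hx1 hx2 hv_pv hvuv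
        subst hxv
        exact hnot ⟨by simp, by simp⟩
    · have hmem3 : e1 ∈ R.edges ∨ e1 = s(q,p) ∨ e1 = s(p,v) := by
        rw [hEP] at he1
        simpa [List.concat_eq_append, or_assoc] using he1
      rcases hmem3 with hR | rfl | rfl
      · refine ⟨f, hf, hfuv, ⟨y, Finset.mem_inter.2 ⟨hyf, hy2⟩⟩,
          e1, ?_, ⟨x, Finset.mem_inter.2 ⟨hxf, hx1⟩⟩⟩
        rw [hdrop]; exact hR
      · exfalso
        have hxv : x ≠ v := by
          intro hh; rw [hh] at hx1; exact hv_notqp hx1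
        have hyp : y ≠ p := by
          intro hh; rw [hh] at hy2; exact hp_notuv hy2
        have hxp : x ≠ p := by
          intro hh
          rw [hh] at hxf
          exact last_case hg hgirth hlinear hf (hPH _ hpvP) hHuv (hfP _ hpvP) hfuv
            hpvuvne hxf hp_pv hyf hy2 (Ne.symm hyp) hv_pv hvuv
        have hyv : y ≠ v := by
          intro hh
          rw [hh] at hyf
          exact last_case hg hgirth hlinear hf (hPH _ hqpP) (hPH _ hpvP) (hfP _ hqpP)
            (hfP _ hpvP) hqppvne hxf hx1 hyf hv_pv hxv hp_qp hp_pv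
        exact berge4 hg hgirth (hPH _ hqpP) (hPH _ hpvP) hHuv hf
          hqppvne hqpuvne (Ne.symm (hfP _ hqpP)) hpvuvne (Ne.symm (hfP _ hpvP))
          (Ne.symm hfuv) hxp hxv hxy (Ne.symm hvp) (Ne.symm hyp) (fun hh => hyv hh.symm)
          hxf hx1 hp_qp hp_pv hv_pv hvuv hy2 hyf
      · exfalso
        exact last_case hg hgirth hlinear hf (hPH _ hpvP) hHuv (hfP _ hpvP) hfuv hpvuvne
          hxf hx1 hyf hy2 hxy hv_pv hvuv
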